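/- Fix positive integers k and ℓ, and define s_0 = k and s_n = (s_0 s_1 ⋯ s_{n−1})^ℓ + 1 for n ≥ 1. Set a_1 = s_0^ℓ and a_{n+1} = (s_n^ℓ − 1) · Π_{i=0}^{n−1} (s_i^ℓ)^{(−1)^{n+i}} for n ≥ 1. Then each a_n is a positive integer, and the series C_{k,ℓ} := Σ_{n=0}^∞ (−1)^n / (s_{n+1} − 1) is equivalent to the simple continued fraction [0; a_1, a_2, a_3, …]; that is, with convergents p_n/q_n defined by p_0 = 0, q_0 = 1, p_1 = 1, q_1 = a_1, p_{n+1} = a_{n+1} p_n + p_{n-1}, q_{n+1} = a_{n+1} q_n + q_{n-1}, one has Σ_{i=0}^{n} (−1)^i / (s_{i+1} − 1) = p_{n+1}/q_{n+1} for all n ≥ 0. -/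

import Mathlib

def Qaux (s : ℕ → ℕ) (l : ℕ) : ℕ → ℕ
  | 0 => 1
  | 1 => s 0 ^ l
  | n + 2 => s (n + 1) ^ l * Qaux s l n

/-- For the Sylvester-type sequence `s_0 = k`, `s_n = (s_0 ⋯ s_{n-1})^ℓ + 1`, the
partial quotients `a_1 = s_0^ℓ`, `a_{n+1} = (s_n^ℓ - 1) ∏_{i<n} (s_i^ℓ)^((-1)^(n+i))`
are positive integers, and the series `C_{k,ℓ} = ∑ (-1)^n / (s_{n+1} - 1)` is
equivalent to the simple continued fraction `[0; a_1, a_2, …]`. -/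
theorem stmt_14 (k l : ℕ) (hk : 0 < k) (hl : 0 < l)
    (s : ℕ → ℕ) (hs0 : s 0 = k)
    (hs : ∀ n : ℕ, s (n + 1) = (∏ i ∈ Finset.range (n + 1), s i) ^ l + 1)
    (a : ℕ → ℝ)
    (ha1 : a 1 = (s 0 : ℝ) ^ l)
    (ha : ∀ n : ℕ, 1 ≤ n →
      a (n + 1) = ((s n : ℝ) ^ l - 1)
        * ∏ i ∈ Finset.range n, ((s i : ℝ) ^ l) ^ ((-1 : ℤ) ^ (n + i)))
    (p q : ℕ → ℝ)
    (hp0 : p 0 = 0) (hq0 : q 0 = 1) (hp1 : p 1 = 1) (hq1 : q 1 = a 1)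
    (hp : ∀ n : ℕ, p (n + 2) = a (n + 2) * p (n + 1) + p n)
    (hq : ∀ n : ℕ, q (n + 2) = a (n + 2) * q (n + 1) + q n) :
    (∀ n : ℕ, 1 ≤ n → ∃ m : ℕ, 0 < m ∧ a n = (m : ℝ)) ∧
    (∀ n : ℕ,
      (∑ i ∈ Finset.range (n + 1), (-1 : ℝ) ^ i / ((s (i + 1) : ℝ) - 1))
        = p (n + 1) / q (n + 1)) := by
  set Q := Qaux s l with hQdef
  have hspos : ∀ n, 0 < s n := by
    intro n
    cases n with
    | zero => rw [hs0]; exact hk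
    | succ n => rw [hs]; omega
  have hQpos' : ∀ n, 0 < Q n ∧ 0 < Q (n + 1) := by
    intro n
    induction n with
    | zero =>
      refine ⟨by simp [hQdef, Qaux], ?_⟩
      show 0 < Qaux s l 1
      simp only [Qaux]
      exact pow_pos (hspos 0) l
    | succ n ih =>
      refine ⟨ih.2, ?_⟩
      show 0 < Qaux s l (n + 2)
      simp only [Qaux]
      exact Nat.mul_pos (pow_pos (hspos _) l) ih.1
  have hQpos : ∀ n, 0 < Q n := fun n => (hQpos' n).1
  have hQne : ∀ n, (Q n : ℝ) ≠ 0 := fun n => by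
    exact_mod_cast (hQpos n).ne'
  have hsne : ∀ n, (s n : ℝ) ≠ 0 := fun n => by
    exact_mod_cast (hspos n).ne'
  have hQQ : ∀ n, Q n * Q (n + 1) = (∏ i ∈ Finset.range (n + 1), s i) ^ l := by
    intro n
    induction n with
    | zero => simp [hQdef, Qaux]
    | succ n ih =>
      show Qaux s l (n + 1) * Qaux s l (n + 2) = _
      rw [Finset.prod_range_succ, mul_pow, ← ih]
      show Qaux s l (n + 1) * (s (n + 1) ^ l * Qaux s l n) = _
      ring
  have hT : ∀ n, (s (n + 1) : ℝ) - 1 = (Q n : ℝ) * (Q (n + 1) : ℝ) := by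
    intro n
    rw [hs n, ← hQQ n]
    push_cast
    ring
  have hQ2 : ∀ n, (Q (n + 2) : ℝ) = (s (n + 1) : ℝ) ^ l * (Q n : ℝ) := by
    intro n
    show ((Qaux s l (n + 2) : ℕ) : ℝ) = _
    simp only [Qaux]
    push_cast
    ring
  have hQ1 : (Q 1 : ℝ) = (s 0 : ℝ) ^ l := by
    show ((Qaux s l 1 : ℕ) : ℝ) = _
    simp only [Qaux]; push_cast; ring
  have hQ0 : (Q 0 : ℝ) = 1 := by
    show ((Qaux s l 0 : ℕ) : ℝ) = _
    simp [Qaux]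
  -- key alternating product lemma
  have hP : ∀ n, (∏ i ∈ Finset.range (n + 1),
      ((s i : ℝ) ^ l) ^ ((-1 : ℤ) ^ ((n + 1) + i))) = (Q n : ℝ) / (Q (n + 1) : ℝ) := by
    intro n
    induction n with
    | zero =>
      rw [Finset.prod_range_one]
      norm_num
      rw [hQ0, hQ1, one_div]
    | succ n ih =>
      rw [Finset.prod_range_succ]
      have e1 : ∀ i, ((-1 : ℤ)) ^ ((n + 1 + 1) + i) = -((-1 : ℤ) ^ ((n + 1) + i)) := by
        intro i
        rw [show (n + 1 + 1) + i = ((n + 1) + i) + 1 from by ring, pow_succ]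
        ring
      have e2 : ((-1 : ℤ)) ^ ((n + 1 + 1) + (n + 1)) = -1 :=
        Odd.neg_one_pow ⟨n + 1, by ring⟩
      rw [e2]
      have : (∏ i ∈ Finset.range (n + 1), ((s i : ℝ) ^ l) ^ ((-1 : ℤ) ^ ((n + 1 + 1) + i)))
          = (∏ i ∈ Finset.range (n + 1), (((s i : ℝ) ^ l) ^ ((-1 : ℤ) ^ ((n + 1) + i)))⁻¹) := by
        refine Finset.prod_congr rfl fun i _ => ?_
        rw [e1 i, zpow_neg]
      rw [this, Finset.prod_inv_distrib, ih, hQ2 n]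
      have hx : ((s (n + 1) : ℝ)) ^ l ≠ 0 :=
        pow_ne_zero l (by exact_mod_cast (hspos (n + 1)).ne')
      rw [zpow_neg, zpow_one]
      field_simp
  have ha' : ∀ n, a (n + 2) = ((s (n + 1) : ℝ) ^ l - 1) * ((Q n : ℝ) / (Q (n + 1) : ℝ)) := by
    intro n
    rw [ha (n + 1) (by omega), hP n]
  -- q n = Q n
  have hq' : ∀ n, q n = (Q n : ℝ) ∧ q (n + 1) = (Q (n + 1) : ℝ) := by
    intro n
    induction n with
    | zero => exact ⟨by rw [hq0, hQ0], by rw [hq1, ha1, hQ1]⟩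
    | succ n ih =>
      refine ⟨ih.2, ?_⟩
      rw [hq n, ha' n, ih.1, ih.2, hQ2 n, mul_assoc,
        div_mul_cancel₀ _ (hQne (n + 1))]
      ring
  -- partial sums
  set S : ℕ → ℝ := fun n => ∑ i ∈ Finset.range (n + 1), (-1 : ℝ) ^ i / ((s (i + 1) : ℝ) - 1) with hSdef
  have hSstep : ∀ n, S (n + 1) = S n + (-1 : ℝ) ^ (n + 1) / ((Q (n + 1) : ℝ) * (Q (n + 2) : ℝ)) := by
    intro n
    simp only [hSdef]
    rw [Finset.sum_range_succ, hT (n + 1)]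
  have hS0 : S 0 = 1 / (Q 1 : ℝ) := by
    have h1 : S 0 = 1 / ((s 1 : ℝ) - 1) := by simp [hSdef]
    rw [h1, hT 0, hQ0, one_mul]
  have hp' : ∀ n, p (n + 1) = (Q (n + 1) : ℝ) * S n ∧ p (n + 2) = (Q (n + 2) : ℝ) * S (n + 1) := by
    intro n
    induction n with
    | zero =>
      constructor
      · rw [hp1, hS0, mul_one_div, div_self (hQne 1)]
      · rw [hp 0, hp0, hp1, ha' 0, hSstep 0, hS0, hQ0]
        have h1 := hQne 1
        have h2 := hQne 2
        have : ((s 1 : ℝ)) ^ l = (Q 2 : ℝ) := by rw [hQ2 0, hQ0, mul_one]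
        rw [this]
        field_simp [hQne]
        ring
    | succ n ih =>
      refine ⟨ih.2, ?_⟩
      rw [hp (n + 1), ha' (n + 1), ih.1, ih.2, hSstep (n + 1), hSstep n, hQ2 (n + 1)]
      simp only [pow_succ]
      field_simp [hQne, hsne]
      ring
  constructor
  · -- integrality and positivity of a n
    intro n hn
    match n, hn with
    | 1, _ =>
      refine ⟨k ^ l, pow_pos hk l, ?_⟩
      rw [ha1, hs0]; push_cast; ring
    | (j + 2), _ =>
      refine ⟨(∑ i ∈ Finset.range l, s (j + 1) ^ i) * (Q j) ^ 2, ?_, ?_⟩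
      · apply Nat.mul_pos
        · apply Finset.sum_pos
          · intro i _
            exact pow_pos (hspos _) i
          · exact ⟨0, Finset.mem_range.mpr hl⟩
        · exact pow_pos (hQpos j) 2
      · rw [ha' j]
        have hg : ((s (j + 1) : ℝ)) ^ l - 1
            = (∑ i ∈ Finset.range l, (s (j + 1) : ℝ) ^ i) * ((s (j + 1) : ℝ) - 1) :=
          (geom_sum_mul _ _).symm
        rw [hg, hT j]
        push_cast
        field_simp [hQne]
  · intro n
    show S n = p (n + 1) / q (n + 1)
    rw [(hp' n).1, (hq' n).2, mul_div_cancel_left₀ _ (hQne (n + 1))]
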